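/- Let T be a finite tree of order n ≥ 2 with l leaves and s support vertices. Then γ_{-1}^d(T) ≥ (3n - l - s + 4)/8 and γ_0^d(T) ≥ (3n - l - s + 4)/6. -/
import Mathlib


open Finset

variable {V : Type*}

/-- `degIn G S v` is the number of neighbors that `v` has in `S` (denoted `δ_S(v)`). -/
def degIn [Fintype V] [DecidableEq V] (G : SimpleGraph V) [DecidableRel G.Adj]
    (S : Finset V) (v : V) : ℕ :=
  (G.neighborFinset v ∩ S).card

/-- A nonempty set `S` is a defensive `k`-alliance in `G` if every vertex of `S` has at least
`k` more neighbors inside `S` than outside. -/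
def IsDefensiveKAlliance [Fintype V] [DecidableEq V] (G : SimpleGraph V) [DecidableRel G.Adj]
    (k : ℤ) (S : Finset V) : Prop :=
  S.Nonempty ∧ ∀ v ∈ S, (degIn G Sᶜ v : ℤ) + k ≤ (degIn G S v : ℤ)

/-- The defensive `k`-alliance number: minimum cardinality of a defensive `k`-alliance. -/
noncomputable def defensiveAllianceNum [Fintype V] [DecidableEq V] (G : SimpleGraph V)
    [DecidableRel G.Adj] (k : ℤ) : ℕ :=
  sInf {m : ℕ | ∃ S : Finset V, IsDefensiveKAlliance G k S ∧ S.card = m}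

/-- `S` is a dominating set: every vertex outside `S` has a neighbor in `S`. -/
def IsDominatingSet (G : SimpleGraph V) (S : Finset V) : Prop :=
  ∀ v, v ∉ S → ∃ u ∈ S, G.Adj u v

/-- A global defensive `k`-alliance is a defensive `k`-alliance which is also dominating. -/
def IsGlobalDefensiveKAlliance [Fintype V] [DecidableEq V] (G : SimpleGraph V)
    [DecidableRel G.Adj] (k : ℤ) (S : Finset V) : Prop :=
  IsDefensiveKAlliance G k S ∧ IsDominatingSet G S

/-- The global defensive `k`-alliance number `γ_k^d(G)`. -/
noncomputable def globalDefensiveAllianceNum [Fintype V] [DecidableEq V] (G : SimpleGraph V)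
    [DecidableRel G.Adj] (k : ℤ) : ℕ :=
  sInf {m : ℕ | ∃ S : Finset V, IsGlobalDefensiveKAlliance G k S ∧ S.card = m}

section Helpers
variable [Fintype V] [DecidableEq V] (G : SimpleGraph V) [DecidableRel G.Adj]

lemma degIn_eq_sum (X : Finset V) (v : V) :
    degIn G X v = ∑ u ∈ X, if G.Adj v u then 1 else 0 := by
  rw [degIn, show G.neighborFinset v ∩ X = X.filter (fun u => G.Adj v u) by
    ext u; simp [SimpleGraph.mem_neighborFinset, and_comm], Finset.card_filter]

lemma degIn_add_compl (A : Finset V) (v : V) :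
    degIn G A v + degIn G Aᶜ v = G.degree v := by
  have hd : Disjoint (G.neighborFinset v ∩ A) (G.neighborFinset v ∩ Aᶜ) :=
    Disjoint.mono Finset.inter_subset_right Finset.inter_subset_right
      disjoint_compl_right
  rw [degIn, degIn, ← SimpleGraph.card_neighborFinset_eq_degree,
    ← Finset.card_union_of_disjoint hd, ← Finset.inter_union_distrib_left]
  simp

lemma sum_degIn_comm (A B : Finset V) :
    ∑ v ∈ A, degIn G B v = ∑ u ∈ B, degIn G A u := by
  simp_rw [degIn_eq_sum]
  rw [Finset.sum_comm]
  exact Finset.sum_congr rfl fun u _ => Finset.sum_congr rfl fun v _ => by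
    simp only [SimpleGraph.adj_comm]

set_option linter.unusedSectionVars false in
lemma degree_pos (hT : G.IsTree) (hn : 2 ≤ Fintype.card V) (v : V) : 1 ≤ G.degree v := by
  obtain ⟨w, hw⟩ := Fintype.exists_ne_of_one_lt_card hn v
  obtain ⟨p⟩ := hT.isConnected.preconnected v w
  cases p with
  | nil => exact absurd rfl hw
  | cons h p =>
    rw [← SimpleGraph.card_neighborFinset_eq_degree]
    exact Finset.card_pos.mpr ⟨_, by simpa using h⟩

lemma core (hT : G.IsTree) (hn : 2 ≤ Fintype.card V) (k : ℤ) (hk : k = -1 ∨ k = 0)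
    (A : Finset V)
    (hdef : ∀ v ∈ A, (degIn G Aᶜ v : ℤ) + k ≤ (degIn G A v : ℤ))
    (hdom : ∀ v, v ∉ A → ∃ u ∈ A, G.Adj u v) :
    3 * (Fintype.card V : ℤ) - ((univ.filter fun v => G.degree v = 1).card : ℤ)
      - ((univ.filter fun v => ∃ u ∈ G.neighborFinset v, G.degree u = 1).card : ℤ) + 4
      ≤ (6 - 2 * k) * A.card := by
  classical
  set n := Fintype.card V with hn'
  set dA := ∑ v ∈ A, degIn G A v with hdA
  set e := ∑ v ∈ A, degIn G Aᶜ v with he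
  set dB := ∑ u ∈ Aᶜ, degIn G Aᶜ u with hdB
  set e' := ∑ u ∈ Aᶜ, degIn G A u with he'
  set L := (univ.filter fun v => G.degree v = 1) with hL
  set S := (univ.filter fun v => ∃ u ∈ G.neighborFinset v, G.degree u = 1) with hS
  set B1 := Aᶜ.filter (fun u => G.degree u = 1) with hB1
  set B2 := Aᶜ.filter (fun u => ¬ G.degree u = 1 ∧ degIn G Aᶜ u = 0) with hB2
  set M := Aᶜ.filter (fun u => ¬ G.degree u = 1 ∧ ¬ degIn G Aᶜ u = 0) with hM
  set W := A.filter (fun w => ∃ u ∈ G.neighborFinset w, G.degree u = 1) with hW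
  -- basic numeric facts
  have hcompl : A.card + Aᶜ.card = n := by
    rw [Finset.card_add_card_compl]
  have hee' : e = e' := sum_degIn_comm G A Aᶜ
  -- degree sum
  have hdegsum : dA + e + (dB + e') = 2 * n - 2 := by
    have h1 : ∀ v ∈ A, degIn G A v + degIn G Aᶜ v = G.degree v :=
      fun v _ => degIn_add_compl G A v
    have h2 : ∀ u ∈ Aᶜ, degIn G Aᶜ u + degIn G A u = G.degree u := by
      intro u _
      have := degIn_add_compl G Aᶜ u
      rwa [compl_compl] at this
    have hA : dA + e = ∑ v ∈ A, G.degree v := by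
      rw [hdA, he, ← Finset.sum_add_distrib]
      exact Finset.sum_congr rfl h1
    have hB : dB + e' = ∑ u ∈ Aᶜ, G.degree u := by
      rw [hdB, he', ← Finset.sum_add_distrib]
      exact Finset.sum_congr rfl h2
    rw [hA, hB, Finset.sum_add_sum_compl, SimpleGraph.sum_degrees_eq_twice_card_edges]
    have := hT.card_edgeFinset
    omega
  -- domination
  have hdomB : ∀ u ∈ Aᶜ, 1 ≤ degIn G A u := by
    intro u hu
    obtain ⟨w, hwA, hadj⟩ := hdom u (by simpa using hu)
    refine Finset.card_pos.mpr ⟨w, ?_⟩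
    simp [SimpleGraph.mem_neighborFinset, hadj.symm, hwA]
  -- partition of B
  have hpart : B1.card + B2.card + M.card = Aᶜ.card := by
    have h1 := Finset.card_filter_add_card_filter_not
      (s := Aᶜ) (p := fun u => G.degree u = 1)
    have h2 := Finset.card_filter_add_card_filter_not
      (s := Aᶜ.filter (fun u => ¬ G.degree u = 1)) (p := fun u => degIn G Aᶜ u = 0)
    rw [Finset.filter_filter, Finset.filter_filter] at h2
    rw [hB1, hB2, hM]
    omega
  -- B side counting: e' ≥ b1 + 2 b2 + m
  have h4 : B1.card + 2 * B2.card + M.card ≤ e' := by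
    have hpt : ∀ u ∈ Aᶜ,
        ((if G.degree u = 1 then 1 else 0)
          + 2 * (if ¬ G.degree u = 1 ∧ degIn G Aᶜ u = 0 then 1 else 0)
          + (if ¬ G.degree u = 1 ∧ ¬ degIn G Aᶜ u = 0 then 1 else 0))
          ≤ degIn G A u := by
      intro u hu
      have hd := degIn_add_compl G A u
      have hd1 := degree_pos G hT hn u
      have hdo := hdomB u hu
      by_cases hdeg : G.degree u = 1
      · rw [if_pos hdeg, if_neg (by tauto : ¬(¬ G.degree u = 1 ∧ degIn G Aᶜ u = 0)),
          if_neg (by tauto : ¬(¬ G.degree u = 1 ∧ ¬ degIn G Aᶜ u = 0))]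
        omega
      · by_cases h0 : degIn G Aᶜ u = 0
        · rw [if_neg hdeg, if_pos (⟨hdeg, h0⟩ : ¬ G.degree u = 1 ∧ degIn G Aᶜ u = 0),
            if_neg (by tauto : ¬(¬ G.degree u = 1 ∧ ¬ degIn G Aᶜ u = 0))]
          omega
        · rw [if_neg hdeg, if_neg (by tauto : ¬(¬ G.degree u = 1 ∧ degIn G Aᶜ u = 0)),
            if_pos (⟨hdeg, h0⟩ : ¬ G.degree u = 1 ∧ ¬ degIn G Aᶜ u = 0)]
          omega
    have := Finset.sum_le_sum hpt
    simp only [Finset.sum_add_distrib, ← Finset.mul_sum, ← Finset.card_filter] at this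
    rw [hB1, hB2, hM]
    exact this
  -- dB ≥ m
  have h5 : M.card ≤ dB := by
    have hpt : ∀ u ∈ Aᶜ,
        (if ¬ G.degree u = 1 ∧ ¬ degIn G Aᶜ u = 0 then 1 else 0) ≤ degIn G Aᶜ u := by
      intro u _
      split
      · next h => omega
      · omega
    have := Finset.sum_le_sum hpt
    rw [← Finset.card_filter] at this
    rw [hM]
    exact this
  -- b1 ≤ l
  have h6 : B1.card ≤ L.card := by
    apply Finset.card_le_card
    rw [hB1, hL]
    intro u hu
    simp only [Finset.mem_filter] at hu ⊢
    exact ⟨Finset.mem_univ u, hu.2⟩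
  -- b1 ≤ sum over W of degIn B
  have h7 : B1.card ≤ ∑ w ∈ W, degIn G Aᶜ w := by
    have hkey : ∀ u ∈ B1, ∃ w ∈ W, G.Adj w u := by
      intro u hu
      rw [hB1, Finset.mem_filter] at hu
      obtain ⟨w, hwA, hadj⟩ := hdom u (by simpa using hu.1)
      refine ⟨w, ?_, hadj⟩
      rw [hW, Finset.mem_filter]
      exact ⟨hwA, ⟨u, by simp [SimpleGraph.mem_neighborFinset, hadj], hu.2⟩⟩
    calc B1.card = ∑ u ∈ B1, 1 := by simp
      _ ≤ ∑ u ∈ B1, ∑ w ∈ W, (if G.Adj w u then 1 else 0) := by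
          apply Finset.sum_le_sum
          intro u hu
          obtain ⟨w, hwW, hadj⟩ := hkey u hu
          calc (1 : ℕ) = if G.Adj w u then 1 else 0 := by simp [hadj]
            _ ≤ ∑ w ∈ W, (if G.Adj w u then 1 else 0) :=
                Finset.single_le_sum (f := fun w => if G.Adj w u then (1:ℕ) else 0)
                  (fun _ _ => by positivity) hwW
      _ = ∑ w ∈ W, ∑ u ∈ B1, (if G.Adj w u then 1 else 0) := Finset.sum_comm
      _ ≤ ∑ w ∈ W, ∑ u ∈ Aᶜ, (if G.Adj w u then 1 else 0) := by
          apply Finset.sum_le_sum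
          intro w _
          apply Finset.sum_le_sum_of_subset
          rw [hB1]
          exact Finset.filter_subset _ _
      _ = ∑ w ∈ W, degIn G Aᶜ w := by
          exact Finset.sum_congr rfl fun w _ => (degIn_eq_sum G Aᶜ w).symm
  have hWS : W.card ≤ S.card := by
    apply Finset.card_le_card
    rw [hW, hS]
    intro w hw
    simp only [Finset.mem_filter] at hw ⊢
    exact ⟨Finset.mem_univ w, hw.2⟩
  have hWA : W ⊆ A := Finset.filter_subset _ _
  -- defense sum
  have h2 : (e : ℤ) + k * A.card ≤ (dA : ℤ) := by
    have := Finset.sum_le_sum hdef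
    rw [Finset.sum_add_distrib, Finset.sum_const, nsmul_eq_mul] at this
    push_cast [he, hdA]
    push_cast at this
    linarith
  -- case split on k for the support bound
  rcases hk with hk | hk
  · -- k = -1
    subst hk
    have h7a : (B1.card : ℤ) ≤ (dA : ℤ) + S.card := by
      have hp : ∀ w ∈ W, degIn G Aᶜ w ≤ degIn G A w + 1 := by
        intro w hw
        have := hdef w (hWA hw)
        omega
      have h1 : ∑ w ∈ W, degIn G Aᶜ w ≤ ∑ w ∈ W, (degIn G A w + 1) :=
        Finset.sum_le_sum hp
      have h2' : ∑ w ∈ W, (degIn G A w + 1) = (∑ w ∈ W, degIn G A w) + W.card := by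
        rw [Finset.sum_add_distrib]; simp
      have h3 : ∑ w ∈ W, degIn G A w ≤ dA :=
        Finset.sum_le_sum_of_subset hWA
      have := h7.trans (h1.trans_eq h2')
      push_cast
      omega
    push_cast
    push_cast at h2
    have hc : (A.card : ℤ) + Aᶜ.card = n := by exact_mod_cast hcompl
    have hds : (dA : ℤ) + e + (dB + e') = 2 * n - 2 := by
      have h2n : (2:ℕ) ≤ n := hn
      push_cast [hdegsum]
      omega
    have hee : (e : ℤ) = e' := by exact_mod_cast hee'
    have h4' : (B1.card : ℤ) + 2 * B2.card + M.card ≤ e' := by exact_mod_cast h4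
    have h5' : (M.card : ℤ) ≤ dB := by exact_mod_cast h5
    have h6' : (B1.card : ℤ) ≤ L.card := by exact_mod_cast h6
    have hpart' : (B1.card : ℤ) + B2.card + M.card = Aᶜ.card := by exact_mod_cast hpart
    linarith
  · -- k = 0
    subst hk
    have hA1 : ∀ v ∈ A, 1 ≤ degIn G A v := by
      intro v hv
      have hd := degIn_add_compl G A v
      have hd1 := degree_pos G hT hn v
      have := hdef v hv
      omega
    have h7b : (B1.card : ℤ) + A.card ≤ (dA : ℤ) + S.card := by
      have hp : ∀ w ∈ W, degIn G Aᶜ w ≤ degIn G A w := by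
        intro w hw
        have := hdef w (hWA hw)
        omega
      have h1 : ∑ w ∈ W, degIn G Aᶜ w ≤ ∑ w ∈ W, degIn G A w :=
        Finset.sum_le_sum hp
      have hsplit : ∑ w ∈ W, degIn G A w + ∑ w ∈ A.filter (fun w => ¬ ∃ u ∈ G.neighborFinset w, G.degree u = 1), degIn G A w = dA := by
        rw [hdA, hW]
        exact Finset.sum_filter_add_sum_filter_not A _ _
      have hrest : (A.filter (fun w => ¬ ∃ u ∈ G.neighborFinset w, G.degree u = 1)).card
          ≤ ∑ w ∈ A.filter (fun w => ¬ ∃ u ∈ G.neighborFinset w, G.degree u = 1), degIn G A w := by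
        rw [Finset.card_eq_sum_ones]
        exact Finset.sum_le_sum fun w hw => hA1 w (Finset.mem_filter.mp hw).1
      have hcards : W.card + (A.filter (fun w => ¬ ∃ u ∈ G.neighborFinset w, G.degree u = 1)).card = A.card := by
        rw [hW]
        exact Finset.card_filter_add_card_filter_not _
      have := h7.trans h1
      push_cast
      omega
    push_cast
    push_cast at h2
    have hc : (A.card : ℤ) + Aᶜ.card = n := by exact_mod_cast hcompl
    have hds : (dA : ℤ) + e + (dB + e') = 2 * n - 2 := by
      have h2n : (2:ℕ) ≤ n := hn
      push_cast [hdegsum]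
      omega
    have hee : (e : ℤ) = e' := by exact_mod_cast hee'
    have h4' : (B1.card : ℤ) + 2 * B2.card + M.card ≤ e' := by exact_mod_cast h4
    have h5' : (M.card : ℤ) ≤ dB := by exact_mod_cast h5
    have h6' : (B1.card : ℤ) ≤ L.card := by exact_mod_cast h6
    have hpart' : (B1.card : ℤ) + B2.card + M.card = Aᶜ.card := by exact_mod_cast hpart
    linarith
end Helpers

/-- Theorem: for a tree `T` of order `n ≥ 2` with `l` leaves and `s` support vertices,
`γ_{-1}^d(T) ≥ (3n - l - s + 4)/8` and `γ_0^d(T) ≥ (3n - l - s + 4)/6`. -/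
theorem tree_globalDefensiveAllianceNum_leaves_support [Fintype V] [DecidableEq V]
    (G : SimpleGraph V) [DecidableRel G.Adj] (hT : G.IsTree) (hn : 2 ≤ Fintype.card V)
    (l s : ℕ)
    (hl : l = (univ.filter fun v => G.degree v = 1).card)
    (hs : s = (univ.filter fun v => ∃ u ∈ G.neighborFinset v, G.degree u = 1).card) :
    (3 * (Fintype.card V : ℚ) - (l : ℚ) - (s : ℚ) + 4) / 8 ≤
        (globalDefensiveAllianceNum G (-1) : ℚ) ∧
      (3 * (Fintype.card V : ℚ) - (l : ℚ) - (s : ℚ) + 4) / 6 ≤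
        (globalDefensiveAllianceNum G 0 : ℚ) := by
  have hNe : Nonempty V := Fintype.card_pos_iff.mp (by omega)
  have hexists : ∀ k : ℤ, k ≤ 0 →
      (globalDefensiveAllianceNum G k) ∈
        {m : ℕ | ∃ S : Finset V, IsGlobalDefensiveKAlliance G k S ∧ S.card = m} := by
    intro k hk
    apply Nat.sInf_mem
    refine ⟨(univ : Finset V).card, (univ : Finset V), ⟨⟨Finset.univ_nonempty, ?_⟩, ?_⟩, rfl⟩
    · intro v _
      have h0 : degIn G (univ : Finset V)ᶜ v = 0 := by
        simp [degIn]
      rw [h0]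
      have : (0 : ℤ) ≤ (degIn G univ v : ℤ) := by positivity
      omega
    · intro v hv
      exact absurd (Finset.mem_univ v) hv
  have key : ∀ k : ℤ, k = -1 ∨ k = 0 →
      3 * (Fintype.card V : ℤ) - (l : ℤ) - (s : ℤ) + 4
        ≤ (6 - 2 * k) * (globalDefensiveAllianceNum G k) := by
    intro k hk
    obtain ⟨S, hS, hcard⟩ := hexists k (by rcases hk with h | h <;> omega)
    rw [← hcard]
    subst hl hs
    exact core G hT hn k hk S hS.1.2 hS.2
  constructor
  · rw [div_le_iff₀ (by norm_num : (0:ℚ) < 8)]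
    have h1 := key (-1) (Or.inl rfl)
    have h2 : ((3 * (Fintype.card V : ℤ) - (l : ℤ) - (s : ℤ) + 4 : ℤ) : ℚ)
        ≤ (((6 - 2 * (-1)) * (globalDefensiveAllianceNum G (-1)) : ℤ) : ℚ) := by
      exact_mod_cast h1
    push_cast at h2
    linarith
  · rw [div_le_iff₀ (by norm_num : (0:ℚ) < 6)]
    have h1 := key 0 (Or.inr rfl)
    have h2 : ((3 * (Fintype.card V : ℤ) - (l : ℤ) - (s : ℤ) + 4 : ℤ) : ℚ)
        ≤ (((6 - 2 * 0) * (globalDefensiveAllianceNum G 0) : ℤ) : ℚ) := by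
      exact_mod_cast h1
    push_cast at h2
    linarith
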